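/- Suppose that R is a prime rich ring, S ∈ Den(R, 𝔞) is a left and right denominator set that respects the ideal structure of primes, and S⁻¹𝔭 is a prime ideal of S⁻¹R for all 𝔭 ∈ min(R, S). Then: (1) 1 ≤ |min(R,S)| ≤ |min(R)| < ∞ and min(S⁻¹R) equals the set of minimal elements (with respect to inclusion) of { S⁻¹𝔭 | 𝔭 ∈ min(R,S) }; in particular |min(S⁻¹R)| ≤ |min(R,S)| < ∞. (2) min(S⁻¹R) = { S⁻¹𝔭 | 𝔭 ∈ min(R,S) } if and only if the ideals { S⁻¹𝔭 | 𝔭 ∈ min(R,S) } are pairwise incomparable. (3) If in addition, for each 𝔭 ∈ min(R,S), the ideal σ_S⁻¹(S⁻¹𝔭) of R is a finitely generated right R-module (e.g. R is right Noetherian), then min(S⁻¹R) = { S⁻¹𝔭 | 𝔭 ∈ min(R,S) }. -/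

import Mathlib

/- Common framework: two-sided ideals, prime ideals, denominator sets and
   left localizations of (possibly noncommutative) rings, described
   axiomatically via their characteristic properties. -/

namespace BavulaMinPrimes

/-- A subset of a ring is a two-sided ideal. -/
def IsIdealSet {R : Type*} [Ring R] (I : Set R) : Prop :=
  (0 : R) ∈ I ∧ (∀ a ∈ I, ∀ b ∈ I, a + b ∈ I) ∧ (∀ a ∈ I, -a ∈ I) ∧
    ∀ a ∈ I, ∀ r : R, r * a ∈ I ∧ a * r ∈ I

/-- A (two-sided) prime ideal: a proper ideal `P` such that `A * B ⊆ P`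
implies `A ⊆ P` or `B ⊆ P` for all ideals `A`, `B`. -/
def IsPrimeIdealSet {R : Type*} [Ring R] (P : Set R) : Prop :=
  IsIdealSet P ∧ P ≠ Set.univ ∧
    ∀ A B : Set R, IsIdealSet A → IsIdealSet B →
      (∀ a ∈ A, ∀ b ∈ B, a * b ∈ P) → A ⊆ P ∨ B ⊆ P

/-- A completely prime ideal: the factor ring is a domain. -/
def IsCompletelyPrimeIdealSet {R : Type*} [Ring R] (P : Set R) : Prop :=
  IsIdealSet P ∧ P ≠ Set.univ ∧ ∀ a b : R, a * b ∈ P → a ∈ P ∨ b ∈ P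

/-- A minimal prime ideal of a ring. -/
def IsMinimalPrimeIdealSet {R : Type*} [Ring R] (P : Set R) : Prop :=
  IsPrimeIdealSet P ∧ ∀ P' : Set R, IsPrimeIdealSet P' → P' ⊆ P → P' = P

/-- A prime minimal over an ideal `A`. -/
def IsMinimalPrimeOver {R : Type*} [Ring R] (A P : Set R) : Prop :=
  IsPrimeIdealSet P ∧ A ⊆ P ∧
    ∀ P' : Set R, IsPrimeIdealSet P' → A ⊆ P' → P' ⊆ P → P' = P

/-- The set `min(R)` of minimal primes of `R`. -/
def minPrimes (R : Type*) [Ring R] : Set (Set R) := { P | IsMinimalPrimeIdealSet P }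

/-- The prime radical: intersection of all prime ideals. -/
def primeRadicalSet (R : Type*) [Ring R] : Set R :=
  { r : R | ∀ P : Set R, IsPrimeIdealSet P → r ∈ P }

/-- A ring is semiprime if its prime radical is zero. -/
def IsSemiprimeRing (R : Type*) [Ring R] : Prop := primeRadicalSet R = {0}

/-- A ring is prime if its zero ideal is a prime ideal. -/
def IsPrimeRing (R : Type*) [Ring R] : Prop := IsPrimeIdealSet ({0} : Set R)

/-- A multiplicative subset: `1 ∈ S`, `0 ∉ S`, closed under multiplication. -/
def IsMulSet {R : Type*} [Ring R] (S : Set R) : Prop :=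
  (1 : R) ∈ S ∧ (0 : R) ∉ S ∧ ∀ s ∈ S, ∀ t ∈ S, s * t ∈ S

/-- The left Ore condition: `S r ∩ R s ≠ ∅`. -/
def LeftOre {R : Type*} [Ring R] (S : Set R) : Prop :=
  ∀ r : R, ∀ s ∈ S, ∃ s' ∈ S, ∃ r' : R, s' * r = r' * s

/-- The right Ore condition: `r S ∩ s R ≠ ∅`. -/
def RightOre {R : Type*} [Ring R] (S : Set R) : Prop :=
  ∀ r : R, ∀ s ∈ S, ∃ s' ∈ S, ∃ r' : R, r * s' = s * r'

/-- A left denominator set: a left Ore multiplicative set such that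
`r s = 0` (with `s ∈ S`) implies `t r = 0` for some `t ∈ S`. -/
def IsLeftDenominatorSet {R : Type*} [Ring R] (S : Set R) : Prop :=
  IsMulSet S ∧ LeftOre S ∧ ∀ r : R, ∀ s ∈ S, r * s = 0 → ∃ t ∈ S, t * r = 0

/-- A right denominator set. -/
def IsRightDenominatorSet {R : Type*} [Ring R] (S : Set R) : Prop :=
  IsMulSet S ∧ RightOre S ∧ ∀ r : R, ∀ s ∈ S, s * r = 0 → ∃ t ∈ S, r * t = 0

/-- `ass_l(S) = { r | s r = 0 for some s ∈ S }`. -/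
def lAss {R : Type*} [Ring R] (S : Set R) : Set R := { r : R | ∃ s ∈ S, s * r = 0 }

/-- `f : R →+* Q` realizes `Q` as the left localization `S⁻¹R`:
elements of `S` become units, every element of `Q` is a left fraction
`(f s)⁻¹ (f r)`, and the kernel of `f` is `ass_l(S)`.  These properties
characterize `S⁻¹R` up to a unique `R`-isomorphism. -/
structure IsLeftLocalization {R Q : Type*} [Ring R] [Ring Q]
    (S : Set R) (f : R →+* Q) : Prop where
  isUnit : ∀ s ∈ S, IsUnit (f s)
  surj : ∀ q : Q, ∃ s ∈ S, ∃ r : R, f s * q = f r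
  ker : ∀ r : R, f r = 0 ↔ r ∈ lAss S

/-- `S⁻¹I = { s⁻¹ a | s ∈ S, a ∈ I }` as a subset of the localization `Q`:
`q ∈ S⁻¹I` iff `f s * q = f a` for some `s ∈ S`, `a ∈ I`. -/
def locSet {R Q : Type*} [Ring R] [Ring Q] (f : R →+* Q) (S : Set R)
    (I : Set R) : Set Q :=
  { q : Q | ∃ s ∈ S, ∃ a ∈ I, f s * q = f a }

/-- A normal element: `R n = n R`. -/
def IsNormalElement {R : Type*} [Ring R] (n : R) : Prop :=
  (∀ r : R, ∃ r' : R, r * n = n * r') ∧ ∀ r : R, ∃ r' : R, n * r = r' * n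

/-- A prime rich ring: every ideal contains a finite product of prime ideals
containing it (the empty product being the whole ring). -/
def IsPrimeRich (R : Type*) [Ring R] : Prop :=
  ∀ A : Set R, IsIdealSet A →
    ∃ (n : ℕ) (P : Fin n → Set R),
      (∀ i, IsPrimeIdealSet (P i) ∧ A ⊆ P i) ∧
      ∀ x : Fin n → R, (∀ i, x i ∈ P i) → (List.ofFn x).prod ∈ A

/-- An ideal which is finitely generated as a right `R`-module. -/
def IsFGRightIdeal {R : Type*} [Ring R] (I : Set R) : Prop :=
  ∃ (m : ℕ) (g : Fin m → R), (∀ i, g i ∈ I) ∧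
    ∀ x ∈ I, ∃ c : Fin m → R, x = ∑ i, g i * c i

section General
variable {T : Type*} [Ring T]

lemma ideal_eq_univ_of_one_mem {I : Set T} (hI : IsIdealSet I) (h1 : (1:T) ∈ I) :
    I = Set.univ := by
  ext r
  simp only [Set.mem_univ, iff_true]
  simpa using (hI.2.2.2 1 h1 r).1

lemma prime_one_not_mem {P : Set T} (hP : IsPrimeIdealSet P) : (1:T) ∉ P :=
  fun h => hP.2.1 (ideal_eq_univ_of_one_mem hP.1 h)

def genIdeal (x : T) : Set T :=
  (AddSubgroup.closure {z : T | ∃ r r', z = r * x * r'} : AddSubgroup T)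

lemma mem_genIdeal_self (x : T) : x ∈ genIdeal x :=
  AddSubgroup.subset_closure ⟨1, 1, by simp⟩

lemma genIdeal_isIdeal (x : T) : IsIdealSet (genIdeal x) := by
  refine ⟨AddSubgroup.zero_mem _, fun a ha b hb => AddSubgroup.add_mem _ ha hb,
    fun a ha => AddSubgroup.neg_mem _ ha, fun a ha => ?_⟩
  refine AddSubgroup.closure_induction
    (p := fun a _ => ∀ r : T, r * a ∈ genIdeal x ∧ a * r ∈ genIdeal x) ?_ ?_ ?_ ?_ ha
  · rintro z ⟨r1, r2, rfl⟩ r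
    exact ⟨AddSubgroup.subset_closure ⟨r * r1, r2, by simp [mul_assoc]⟩,
      AddSubgroup.subset_closure ⟨r1, r2 * r, by simp [mul_assoc]⟩⟩
  · intro r
    rw [mul_zero, zero_mul]
    exact ⟨AddSubgroup.zero_mem _, AddSubgroup.zero_mem _⟩
  · intro a b _ _ ha hb r
    refine ⟨?_, ?_⟩
    · rw [mul_add]; exact AddSubgroup.add_mem _ (ha r).1 (hb r).1
    · rw [add_mul]; exact AddSubgroup.add_mem _ (ha r).2 (hb r).2
  · intro a _ ha r
    refine ⟨?_, ?_⟩
    · rw [mul_neg]; exact AddSubgroup.neg_mem _ (ha r).1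
    · rw [neg_mul]; exact AddSubgroup.neg_mem _ (ha r).2

lemma prime_mul_mem {P : Set T} (hP : IsPrimeIdealSet P) {x y : T}
    (h : ∀ q : T, x * q * y ∈ P) : x ∈ P ∨ y ∈ P := by
  have key : ∀ a ∈ genIdeal x, ∀ b ∈ genIdeal y, a * b ∈ P := by
    intro a ha
    refine AddSubgroup.closure_induction
      (p := fun a _ => ∀ b ∈ genIdeal y, a * b ∈ P) ?_ ?_ ?_ ?_ ha
    · rintro z ⟨r1, r2, rfl⟩ b hb
      refine AddSubgroup.closure_induction
        (p := fun b _ => (r1 * x * r2) * b ∈ P) ?_ ?_ ?_ ?_ hb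
      · rintro w ⟨s1, s2, rfl⟩
        have h1 : x * (r2 * s1) * y ∈ P := h _
        have h2 := (hP.1.2.2.2 _ h1 s2).2
        have h3 := (hP.1.2.2.2 _ h2 r1).1
        have e : r1 * (x * (r2 * s1) * y * s2) = (r1 * x * r2) * (s1 * y * s2) := by
          simp [mul_assoc]
        rwa [e] at h3
      · simpa using hP.1.1
      · intro b c _ _ hb hc
        rw [mul_add]; exact hP.1.2.1 _ hb _ hc
      · intro b _ hb
        rw [mul_neg]; exact hP.1.2.2.1 _ hb
    · intro b _
      simpa using hP.1.1
    · intro a c _ _ ha hc b hb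
      rw [add_mul]; exact hP.1.2.1 _ (ha b hb) _ (hc b hb)
    · intro a _ ha b hb
      rw [neg_mul]; exact hP.1.2.2.1 _ (ha b hb)
  rcases hP.2.2 _ _ (genIdeal_isIdeal x) (genIdeal_isIdeal y) key with h' | h'
  · exact Or.inl (h' (mem_genIdeal_self x))
  · exact Or.inr (h' (mem_genIdeal_self y))

lemma prime_exists_avoid {P : Set T} (hP : IsPrimeIdealSet P) {x y : T}
    (hx : x ∉ P) (hy : y ∉ P) : ∃ q, x * q * y ∉ P := by
  by_contra h
  push_neg at h
  rcases prime_mul_mem hP h with h' | h' <;> [exact hx h'; exact hy h']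

end General

section General2
variable {T : Type*} [Ring T]

lemma prime_list {P : Set T} (hP : IsPrimeIdealSet P) :
    ∀ l : List (Set T), (∀ I ∈ l, IsIdealSet I) → (∀ I ∈ l, ¬ I ⊆ P) →
      ∃ u : List T, List.Forall₂ (· ∈ ·) u l ∧ u.prod ∉ P := by
  intro l
  induction l with
  | nil =>
    intro _ _
    exact ⟨[], List.Forall₂.nil, by simpa using prime_one_not_mem hP⟩
  | cons I₀ ls ih =>
    intro hid hnsub
    obtain ⟨u, hu, hprod⟩ := ih (fun I hI => hid I (List.mem_cons_of_mem _ hI))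
      (fun I hI => hnsub I (List.mem_cons_of_mem _ hI))
    obtain ⟨x₀, hx₀I, hx₀P⟩ := Set.not_subset.mp (hnsub I₀ (List.mem_cons_self))
    obtain ⟨q, hq⟩ := prime_exists_avoid hP hx₀P hprod
    have hI₀ : IsIdealSet I₀ := hid I₀ (List.mem_cons_self)
    cases hu with
    | nil =>
      refine ⟨[x₀ * q], List.Forall₂.cons ((hI₀.2.2.2 x₀ hx₀I q).2) List.Forall₂.nil, ?_⟩
      simpa using hq
    | @cons u₀ J u' ls' h₁ h₂ =>
      have hJ : IsIdealSet J := hid J (List.mem_cons_of_mem _ (List.mem_cons_self))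
      refine ⟨x₀ :: (q * u₀) :: u',
        List.Forall₂.cons hx₀I (List.Forall₂.cons ((hJ.2.2.2 u₀ h₁ q).1) h₂), ?_⟩
      have e : (x₀ :: (q * u₀) :: u').prod = x₀ * q * (u₀ :: u').prod := by
        simp [mul_assoc]
      rwa [e]

lemma exists_prime (T : Type*) [Ring T] (h01 : (0:T) ≠ 1) :
    ∃ P : Set T, IsPrimeIdealSet P := by
  have hzero : IsIdealSet ({0} : Set T) := by
    refine ⟨rfl, ?_, ?_, ?_⟩ <;> simp
  obtain ⟨m, _, hmax⟩ := zorn_subset_nonempty {I : Set T | IsIdealSet I ∧ (1:T) ∉ I}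
    (fun c hc hchain hne => by
      obtain ⟨I₁, hI₁⟩ := hne
      refine ⟨⋃₀ c, ⟨⟨Set.mem_sUnion.mpr ⟨I₁, hI₁, (hc hI₁).1.1⟩, ?_, ?_, ?_⟩, ?_⟩,
        fun s hs => Set.subset_sUnion_of_mem hs⟩
      · rintro a ⟨Ia, hIa, ha⟩ b ⟨Ib, hIb, hb⟩
        rcases hchain.total hIa hIb with h | h
        · exact ⟨Ib, hIb, (hc hIb).1.2.1 a (h ha) b hb⟩
        · exact ⟨Ia, hIa, (hc hIa).1.2.1 a ha b (h hb)⟩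
      · rintro a ⟨Ia, hIa, ha⟩
        exact ⟨Ia, hIa, (hc hIa).1.2.2.1 a ha⟩
      · rintro a ⟨Ia, hIa, ha⟩ r
        exact ⟨⟨Ia, hIa, ((hc hIa).1.2.2.2 a ha r).1⟩, ⟨Ia, hIa, ((hc hIa).1.2.2.2 a ha r).2⟩⟩
      · rintro ⟨Ia, hIa, ha⟩
        exact (hc hIa).2 ha)
    {0} ⟨hzero, by simpa using h01.symm⟩
  refine ⟨m, hmax.prop.1, fun h => hmax.prop.2 (h ▸ Set.mem_univ 1), ?_⟩
  intro A B hA hB hAB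
  by_cases hAm : A ⊆ m
  · exact Or.inl hAm
  right
  obtain ⟨a, haA, ham⟩ := Set.not_subset.mp hAm
  -- consider m' = {z | ∃ x ∈ A, ∃ y ∈ m, z = x + y}
  set m' : Set T := {z | ∃ x ∈ A, ∃ y ∈ m, z = x + y} with hm'
  have hmm' : m ⊆ m' := fun y hy => ⟨0, hA.1, y, hy, by simp⟩
  have hAm' : A ⊆ m' := fun x hx => ⟨x, hx, 0, hmax.prop.1.1, by simp⟩
  have hm'id : IsIdealSet m' := by
    refine ⟨hmm' hmax.prop.1.1, ?_, ?_, ?_⟩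
    · rintro _ ⟨x1, hx1, y1, hy1, rfl⟩ _ ⟨x2, hx2, y2, hy2, rfl⟩
      exact ⟨x1 + x2, hA.2.1 _ hx1 _ hx2, y1 + y2, hmax.prop.1.2.1 _ hy1 _ hy2, by abel⟩
    · rintro _ ⟨x1, hx1, y1, hy1, rfl⟩
      exact ⟨-x1, hA.2.2.1 _ hx1, -y1, hmax.prop.1.2.2.1 _ hy1, by abel⟩
    · rintro _ ⟨x1, hx1, y1, hy1, rfl⟩ r
      exact ⟨⟨r * x1, (hA.2.2.2 _ hx1 r).1, r * y1, (hmax.prop.1.2.2.2 _ hy1 r).1, by rw [mul_add]⟩,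
        ⟨x1 * r, (hA.2.2.2 _ hx1 r).2, y1 * r, (hmax.prop.1.2.2.2 _ hy1 r).2, by rw [add_mul]⟩⟩
  have h1m' : (1:T) ∈ m' := by
    by_contra h1
    have := hmax.2 (y := m') ⟨hm'id, h1⟩ hmm'
    exact ham (this (hAm' haA))
  obtain ⟨x, hx, y, hy, hxy⟩ := h1m'
  intro b hb
  have : b = x * b + y * b := by
    rw [← add_mul, ← hxy, one_mul]
  rw [this]
  exact hmax.prop.1.2.1 _ (hAB x hx b hb) _ ((hmax.prop.1.2.2.2 y hy b).2)

lemma ideal_sum {I : Set T} (hI : IsIdealSet I) {ι : Type*} (s : Finset ι) (g : ι → T)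
    (h : ∀ i ∈ s, g i ∈ I) : ∑ i ∈ s, g i ∈ I := by
  classical
  induction s using Finset.induction_on with
  | empty => simpa using hI.1
  | insert _ _ hnot ih =>
    rw [Finset.sum_insert hnot]
    exact hI.2.1 _ (h _ (Finset.mem_insert_self _ _)) _
      (ih fun i hi => h i (Finset.mem_insert_of_mem hi))

end General2

section General3
variable {T : Type*} [Ring T]

lemma forall₂_ofFn {n : ℕ} {P : Fin n → Set T} {c : List T}
    (h : List.Forall₂ (· ∈ ·) c (List.ofFn P)) :
    ∃ x : Fin n → T, (∀ i, x i ∈ P i) ∧ List.ofFn x = c := by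
  rw [List.forall₂_iff_get] at h
  obtain ⟨hlen, hget⟩ := h
  have hlen' : c.length = n := by simpa using hlen
  refine ⟨fun i => c.get (Fin.cast hlen'.symm i), fun i => ?_, ?_⟩
  · have hi : (i : ℕ) < c.length := by omega
    have hi2 : (i : ℕ) < (List.ofFn P).length := by simp
    have := hget i hi hi2
    rw [List.get_ofFn] at this
    convert this using 2 <;> exact Fin.ext rfl
  · apply List.ext_get (by simp [hlen'])
    intro i h1 h2
    simp

/-- Consequences of prime richness for the zero ideal. -/
lemma minPrimes_facts (h01 : (0:T) ≠ 1) (hrich : IsPrimeRich T) :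
    (minPrimes T).Finite ∧
      ∀ 𝔭 : Set T, IsPrimeIdealSet 𝔭 → ∃ p₀, IsMinimalPrimeIdealSet p₀ ∧ p₀ ⊆ 𝔭 := by
  have hzero : IsIdealSet ({0} : Set T) := by
    refine ⟨rfl, ?_, ?_, ?_⟩ <;> simp
  obtain ⟨n, P, hP, hprod⟩ := hrich {0} hzero
  have hcontain : ∀ 𝔭 : Set T, IsPrimeIdealSet 𝔭 → ∃ i, P i ⊆ 𝔭 := by
    intro 𝔭 h𝔭
    by_contra hno
    push_neg at hno
    obtain ⟨u, hu, hprodP⟩ := prime_list h𝔭 (List.ofFn P)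
      (by intro I hI
          obtain ⟨i, rfl⟩ := List.mem_ofFn.mp hI
          exact (hP i).1.1)
      (by intro I hI
          obtain ⟨i, rfl⟩ := List.mem_ofFn.mp hI
          exact hno i)
    obtain ⟨x, hx, hofn⟩ := forall₂_ofFn hu
    have h0 : u.prod = 0 := by
      have := hprod x hx
      rw [hofn] at this
      simpa using this
    exact hprodP (h0 ▸ h𝔭.1.1)
  have hmin : ∀ 𝔭 : Set T, IsPrimeIdealSet 𝔭 →
      ∃ p₀, IsMinimalPrimeIdealSet p₀ ∧ p₀ ⊆ 𝔭 := by
    intro 𝔭 h𝔭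
    obtain ⟨i, hi⟩ := hcontain 𝔭 h𝔭
    have hG : ({Q' ∈ Set.range P | Q' ⊆ 𝔭}).Finite :=
      (Set.finite_range P).subset (Set.sep_subset _ _)
    obtain ⟨m, hmG, hmmin'⟩ := Set.Finite.exists_minimalFor id _ hG ⟨P i, ⟨i, rfl⟩, hi⟩
    have hmmin : ∀ a ∈ {Q' ∈ Set.range P | Q' ⊆ 𝔭}, a ≤ m → m = a :=
      fun a ha hle => le_antisymm (hmmin' ha hle) hle
    obtain ⟨j, hj⟩ := hmG.1
    refine ⟨m, ⟨hj ▸ hP j |>.1, ?_⟩, hmG.2⟩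
    intro P'' hP'' hsub
    obtain ⟨k, hk⟩ := hcontain P'' hP''
    have hkG : P k ∈ {Q' ∈ Set.range P | Q' ⊆ 𝔭} := ⟨⟨k, rfl⟩, (hk.trans hsub).trans hmG.2⟩
    have heq : m = P k := hmmin _ hkG (hk.trans hsub)
    exact subset_antisymm hsub (heq ▸ hk)
  refine ⟨?_, hmin⟩
  have : minPrimes T ⊆ Set.range P := by
    intro p₀ hp₀
    obtain ⟨i, hi⟩ := hcontain p₀ hp₀.1
    have := hp₀.2 (P i) (hP i).1 hi
    exact ⟨i, this⟩
  exact (Set.finite_range P).subset this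

end General3

section Loc
variable {R Q : Type*} [Ring R] [Ring Q] {S : Set R} {f : R →+* Q}

lemma mem_locSet_of_mem (hS : IsMulSet S) {I : Set R} {a : R} (ha : a ∈ I) :
    f a ∈ locSet f S I :=
  ⟨1, hS.1, a, ha, by simp⟩

lemma locSet_mono {I J : Set R} (h : I ⊆ J) : locSet f S I ⊆ locSet f S J := by
  rintro q ⟨s, hs, a, ha, heq⟩
  exact ⟨s, hs, a, h ha, heq⟩

lemma ker_isIdeal (f : R →+* Q) : IsIdealSet {r : R | f r = 0} := by
  refine ⟨by simp, ?_, ?_, ?_⟩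
  · intro a ha b hb
    have ha' : f a = 0 := ha
    have hb' : f b = 0 := hb
    show f (a + b) = 0
    rw [map_add, ha', hb', add_zero]
  · intro a ha
    have ha' : f a = 0 := ha
    show f (-a) = 0
    rw [map_neg, ha', neg_zero]
  · intro a ha r
    have ha' : f a = 0 := ha
    exact ⟨by show f (r * a) = 0; rw [map_mul, ha', mul_zero],
      by show f (a * r) = 0; rw [map_mul, ha', zero_mul]⟩

/-- Key commutation lemma: using that `S⁻¹p` is an ideal, a fraction
`f a * (f s)⁻¹` with `a ∈ p` can be rewritten as a left fraction with
numerator in `p`. -/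
lemma commute_past (hS : IsMulSet S) (hf : IsLeftLocalization S f)
    {p : Set R} (hpl : IsIdealSet (locSet f S p)) (hpid : IsIdealSet p)
    {a : R} (ha : a ∈ p) {s : R} (hs : s ∈ S) :
    ∃ t ∈ S, ∃ c ∈ p, t * a = c * s := by
  obtain ⟨U, hU⟩ := hf.isUnit s hs
  have hmem : f a * ↑U⁻¹ ∈ locSet f S p :=
    (hpl.2.2.2 (f a) (mem_locSet_of_mem hS ha) ↑U⁻¹).2
  obtain ⟨s', hs', c, hc, heq⟩ := hmem
  have heq2 : f s' * f a = f c * f s := by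
    have h2 := congrArg (· * (U : Q)) heq
    simp only [mul_assoc, Units.inv_mul, mul_one] at h2
    rwa [hU] at h2
  have hker : f (s' * a - c * s) = 0 := by
    rw [map_sub, map_mul, map_mul, heq2, sub_self]
  rw [hf.ker] at hker
  obtain ⟨t', ht', hz⟩ := hker
  refine ⟨t' * s', hS.2.2 _ ht' _ hs', t' * c, (hpid.2.2.2 c hc t').1, ?_⟩
  have h3 : t' * (s' * a) - t' * (c * s) = 0 := by rw [← mul_sub]; exact hz
  have h4 : t' * (s' * a) = t' * (c * s) := sub_eq_zero.mp h3
  rw [mul_assoc, h4, ← mul_assoc]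

/-- Products of elements of localized primes are controlled by products of
elements of the primes. -/
lemma prod_locSet (hS : IsMulSet S) (hf : IsLeftLocalization S f)
    (hresp : ∀ p : Set R, IsPrimeIdealSet p → IsIdealSet (locSet f S p)) :
    ∀ {l : List (Set R)} {u : List Q},
      List.Forall₂ (fun q p => q ∈ locSet f S p) u l →
      (∀ p ∈ l, IsPrimeIdealSet p) →
      ∃ s ∈ S, ∃ c : List R, List.Forall₂ (· ∈ ·) c l ∧ f s * u.prod = f c.prod := by
  intro l u h
  induction h with
  | nil => exact fun _ => ⟨1, hS.1, [], List.Forall₂.nil, by simp⟩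
  | @cons u₀ p₀ u' l' h₀ h' ih =>
    intro hpr
    obtain ⟨s, hs, c, hc, heq⟩ := ih (fun p hp => hpr p (List.mem_cons_of_mem _ hp))
    obtain ⟨s₀, hs₀, a₀, ha₀, heq₀⟩ := h₀
    have hp₀ : IsPrimeIdealSet p₀ := hpr p₀ (List.mem_cons_self)
    obtain ⟨t, ht, c₀, hc₀, habc⟩ :=
      commute_past hS hf (hresp p₀ hp₀) hp₀.1 ha₀ hs
    refine ⟨t * s₀, hS.2.2 _ ht _ hs₀, c₀ :: c, List.Forall₂.cons hc₀ hc, ?_⟩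
    rw [List.prod_cons, List.prod_cons, map_mul, map_mul]
    calc f t * f s₀ * (u₀ * u'.prod)
        = f t * (f s₀ * u₀) * u'.prod := by rw [mul_assoc, mul_assoc, mul_assoc]
      _ = f t * f a₀ * u'.prod := by rw [heq₀]
      _ = f (t * a₀) * u'.prod := by rw [map_mul]
      _ = f (c₀ * s) * u'.prod := by rw [habc]
      _ = f c₀ * (f s * u'.prod) := by rw [map_mul, mul_assoc]
      _ = f c₀ * f c.prod := by rw [heq]

end Loc

section Loc2
variable {R Q : Type*} [Ring R] [Ring Q] {S : Set R} {f : R →+* Q}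

lemma locSet_ker (hS : IsMulSet S) (hf : IsLeftLocalization S f) :
    locSet f S {r : R | f r = 0} = {0} := by
  ext q
  constructor
  · rintro ⟨s, hs, a, (ha : f a = 0), heq⟩
    rw [ha] at heq
    simpa using (hf.isUnit s hs).mul_right_eq_zero.mp heq
  · rintro rfl
    exact ⟨1, hS.1, 0, by simp, by simp⟩

lemma preimage_isIdeal {I : Set Q} (hI : IsIdealSet I) : IsIdealSet (f ⁻¹' I) := by
  refine ⟨?_, ?_, ?_, ?_⟩
  · show f 0 ∈ I; simpa using hI.1
  · intro a ha b hb
    show f (a + b) ∈ I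
    rw [map_add]; exact hI.2.1 _ ha _ hb
  · intro a ha
    show f (-a) ∈ I
    rw [map_neg]; exact hI.2.2.1 _ ha
  · intro a ha r
    constructor
    · show f (r * a) ∈ I; rw [map_mul]; exact (hI.2.2.2 _ ha (f r)).1
    · show f (a * r) ∈ I; rw [map_mul]; exact (hI.2.2.2 _ ha (f r)).2

lemma fs_mem_prime_absurd (hf : IsLeftLocalization S f) {P' : Set Q}
    (hP' : IsPrimeIdealSet P') {s : R} (hs : s ∈ S) (hmem : f s ∈ P') : False := by
  obtain ⟨U, hU⟩ := hf.isUnit s hs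
  have h1 : (↑U⁻¹ * f s : Q) ∈ P' := (hP'.1.2.2.2 _ hmem ↑U⁻¹).1
  rw [← hU, Units.inv_mul] at h1
  exact prime_one_not_mem hP' h1

/-- Every prime ideal of the localization contains `S⁻¹p₀` for some
minimal prime `p₀` of `R` disjoint from `S`. -/
lemma key1 (h01 : (0:R) ≠ 1) (hrich : IsPrimeRich R) (hS : IsMulSet S)
    (hf : IsLeftLocalization S f)
    (hresp : ∀ p : Set R, IsPrimeIdealSet p → IsIdealSet (locSet f S p))
    {P' : Set Q} (hP' : IsPrimeIdealSet P') :
    ∃ p₀, IsMinimalPrimeIdealSet p₀ ∧ p₀ ∩ S = ∅ ∧ locSet f S p₀ ⊆ P' := by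
  obtain ⟨n, P, hP, hprod⟩ := hrich {r : R | f r = 0} (ker_isIdeal f)
  have hex : ∃ i, locSet f S (P i) ⊆ P' := by
    by_contra hno
    push_neg at hno
    obtain ⟨u, hu, hup⟩ := prime_list hP' ((List.ofFn P).map (locSet f S))
      (by intro I hI
          obtain ⟨J, hJ, rfl⟩ := List.mem_map.mp hI
          obtain ⟨i, rfl⟩ := List.mem_ofFn.mp hJ
          exact hresp _ (hP i).1)
      (by intro I hI
          obtain ⟨J, hJ, rfl⟩ := List.mem_map.mp hI
          obtain ⟨i, rfl⟩ := List.mem_ofFn.mp hJ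
          exact hno i)
    rw [List.forall₂_map_right_iff] at hu
    obtain ⟨s, hs, c, hc, heq⟩ := prod_locSet hS hf hresp hu
      (by intro p hp
          obtain ⟨i, rfl⟩ := List.mem_ofFn.mp hp
          exact (hP i).1)
    obtain ⟨x, hx, hofn⟩ := forall₂_ofFn hc
    have h0 : f c.prod = 0 := by
      have := hprod x hx
      rwa [hofn] at this
    rw [h0] at heq
    have hz : u.prod = 0 := (hf.isUnit s hs).mul_right_eq_zero.mp heq
    exact hup (hz ▸ hP'.1.1)
  obtain ⟨i, hi⟩ := hex
  have hdisj : P i ∩ S = ∅ := by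
    rw [Set.eq_empty_iff_forall_notMem]
    rintro s ⟨hsp, hsS⟩
    exact fs_mem_prime_absurd hf hP' hsS (hi (mem_locSet_of_mem hS hsp))
  obtain ⟨p₀, hp₀min, hp₀sub⟩ := (minPrimes_facts h01 hrich).2 (P i) (hP i).1
  refine ⟨p₀, hp₀min, ?_, (locSet_mono hp₀sub).trans hi⟩
  rw [Set.eq_empty_iff_forall_notMem]
  rintro s ⟨hsp, hsS⟩
  rw [Set.eq_empty_iff_forall_notMem] at hdisj
  exact hdisj s ⟨hp₀sub hsp, hsS⟩

lemma common_left_mult (hSl : IsLeftDenominatorSet S) :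
    ∀ l : List R, (∀ x ∈ l, x ∈ S) → ∃ t ∈ S, ∀ x ∈ l, ∃ r, t = r * x := by
  intro l
  induction l with
  | nil => exact fun _ => ⟨1, hSl.1.1, by simp⟩
  | cons x₀ ls ih =>
    intro hl
    obtain ⟨t', ht', hmul⟩ := ih fun x hx => hl x (List.mem_cons_of_mem _ hx)
    obtain ⟨s', hs', r', hsr⟩ := hSl.2.1 t' x₀ (hl x₀ (List.mem_cons_self))
    refine ⟨s' * t', hSl.1.2.2 _ hs' _ ht', ?_⟩
    intro x hx
    rcases List.mem_cons.mp hx with rfl | hx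
    · exact ⟨r', hsr⟩
    · obtain ⟨r, hr⟩ := hmul x hx
      exact ⟨s' * r, by rw [hr, ← mul_assoc]⟩

/-- Under the finite generation hypothesis, the contraction of `S⁻¹p`
equals `p` for `p` a minimal prime disjoint from `S`. -/
lemma contraction_eq (hSl : IsLeftDenominatorSet S) (hf : IsLeftLocalization S f)
    (hresp : ∀ p : Set R, IsPrimeIdealSet p → IsIdealSet (locSet f S p))
    {p : Set R} (hp : IsMinimalPrimeIdealSet p) (hdisj : p ∩ S = ∅)
    (hfg : IsFGRightIdeal (f ⁻¹' locSet f S p)) : f ⁻¹' locSet f S p = p := by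
  have hS : IsMulSet S := hSl.1
  obtain ⟨m, g, hg, hgen⟩ := hfg
  have hLp : IsIdealSet (locSet f S p) := hresp p hp.1
  have hp'id : IsIdealSet (f ⁻¹' locSet f S p) := preimage_isIdeal hLp
  have hsub : p ⊆ f ⁻¹' locSet f S p := fun a ha => mem_locSet_of_mem hS ha
  have hti : ∀ i, ∃ t ∈ S, t * g i ∈ p := by
    intro i
    obtain ⟨s, hs, a, ha, heq⟩ := hg i
    have hker : f (s * g i - a) = 0 := by
      rw [map_sub, map_mul, heq, sub_self]
    rw [hf.ker] at hker
    obtain ⟨t', ht', hz⟩ := hker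
    refine ⟨t' * s, hS.2.2 _ ht' _ hs, ?_⟩
    have h3 : t' * (s * g i) - t' * a = 0 := by rw [← mul_sub]; exact hz
    have h4 : t' * (s * g i) = t' * a := sub_eq_zero.mp h3
    rw [mul_assoc, h4]
    exact (hp.1.1.2.2.2 a ha t').1
  choose tf htS htp using hti
  obtain ⟨t, ht, hmul⟩ := common_left_mult hSl (List.ofFn tf)
    (by intro x hx
        obtain ⟨i, rfl⟩ := List.mem_ofFn.mp hx
        exact htS i)
  have htp' : ∀ x ∈ f ⁻¹' locSet f S p, t * x ∈ p := by
    intro x hx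
    obtain ⟨c, hc⟩ := hgen x hx
    rw [hc, Finset.mul_sum]
    refine ideal_sum hp.1.1 _ _ ?_
    intro i _
    obtain ⟨r, hr⟩ := hmul (tf i) (List.mem_ofFn.mpr ⟨i, rfl⟩)
    have : t * (g i * c i) = r * (tf i * g i) * c i := by
      rw [hr]; simp [mul_assoc]
    rw [this]
    exact (hp.1.1.2.2.2 _ ((hp.1.1.2.2.2 _ (htp i) r).1) (c i)).2
  have hTp' : ∀ u ∈ genIdeal t, ∀ v ∈ f ⁻¹' locSet f S p, u * v ∈ p := by
    intro u hu
    refine AddSubgroup.closure_induction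
      (p := fun u _ => ∀ v ∈ f ⁻¹' locSet f S p, u * v ∈ p) ?_ ?_ ?_ ?_ hu
    · rintro z ⟨r1, r2, rfl⟩ v hv
      have h1 : t * (r2 * v) ∈ p := htp' _ ((hp'id.2.2.2 v hv r2).1)
      have h2 := (hp.1.1.2.2.2 _ h1 r1).1
      have e : r1 * (t * (r2 * v)) = r1 * t * r2 * v := by simp [mul_assoc]
      rwa [e] at h2
    · intro v _
      simpa using hp.1.1.1
    · intro a b _ _ hia hib v hv
      rw [add_mul]; exact hp.1.1.2.1 _ (hia v hv) _ (hib v hv)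
    · intro a _ hia v hv
      rw [neg_mul]; exact hp.1.1.2.2.1 _ (hia v hv)
  rcases hp.1.2.2 _ _ (genIdeal_isIdeal t) hp'id hTp' with h | h
  · exfalso
    rw [Set.eq_empty_iff_forall_notMem] at hdisj
    exact hdisj t ⟨h (mem_genIdeal_self t), ht⟩
  · exact subset_antisymm h hsub

end Loc2

/-- Let `R` be prime rich, `S ∈ Den(R, 𝔞)` a (left and right)
denominator set respecting the ideal structure of primes, with `S⁻¹𝔭` prime
for all `𝔭 ∈ min(R,S)`.  Then: (1) `1 ≤ |min(R,S)| ≤ |min(R)| < ∞` and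
`min(S⁻¹R)` is the set of minimal elements of `{S⁻¹𝔭 | 𝔭 ∈ min(R,S)}`,
so `|min(S⁻¹R)| ≤ |min(R,S)| < ∞`; (2) `min(S⁻¹R) = {S⁻¹𝔭 | 𝔭 ∈ min(R,S)}`
iff these ideals are pairwise incomparable; (3) if moreover each
`σ_S⁻¹(S⁻¹𝔭)` is finitely generated as a right `R`-module, then
`min(S⁻¹R) = {S⁻¹𝔭 | 𝔭 ∈ min(R,S)}`. -/
theorem statement4 {R Q : Type*} [Ring R] [Ring Q]
    (hrich : IsPrimeRich R)
    {S : Set R} (hSl : IsLeftDenominatorSet S) (hSr : IsRightDenominatorSet S)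
    {A : Set R} (hass : lAss S = A)
    (f : R →+* Q) (hf : IsLeftLocalization S f)
    (hresp : ∀ p : Set R, IsPrimeIdealSet p → IsIdealSet (locSet f S p))
    (hprime : ∀ p ∈ {p : Set R | IsMinimalPrimeIdealSet p ∧ p ∩ S = ∅},
      IsPrimeIdealSet (locSet f S p)) :
    ({p : Set R | IsMinimalPrimeIdealSet p ∧ p ∩ S = ∅}.Nonempty ∧
      (minPrimes R).Finite ∧
      {p : Set R | IsMinimalPrimeIdealSet p ∧ p ∩ S = ∅}.ncard ≤ (minPrimes R).ncard ∧
      minPrimes Q =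
        {P ∈ locSet f S '' {p : Set R | IsMinimalPrimeIdealSet p ∧ p ∩ S = ∅} |
          ∀ P' ∈ locSet f S '' {p : Set R | IsMinimalPrimeIdealSet p ∧ p ∩ S = ∅},
            P' ⊆ P → P' = P} ∧
      (minPrimes Q).ncard ≤ {p : Set R | IsMinimalPrimeIdealSet p ∧ p ∩ S = ∅}.ncard) ∧
    ((minPrimes Q = locSet f S '' {p : Set R | IsMinimalPrimeIdealSet p ∧ p ∩ S = ∅}) ↔
      ∀ P ∈ locSet f S '' {p : Set R | IsMinimalPrimeIdealSet p ∧ p ∩ S = ∅},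
        ∀ P' ∈ locSet f S '' {p : Set R | IsMinimalPrimeIdealSet p ∧ p ∩ S = ∅},
          P ⊆ P' → P = P') ∧
    ((∀ p ∈ {p : Set R | IsMinimalPrimeIdealSet p ∧ p ∩ S = ∅},
        IsFGRightIdeal (f ⁻¹' locSet f S p)) →
      minPrimes Q = locSet f S '' {p : Set R | IsMinimalPrimeIdealSet p ∧ p ∩ S = ∅}) := by
  classical
  have hS : IsMulSet S := hSl.1
  have h01R : (0:R) ≠ 1 := fun h => hS.2.1 (h ▸ hS.1)
  set M : Set (Set R) := {p : Set R | IsMinimalPrimeIdealSet p ∧ p ∩ S = ∅} with hMdef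
  have hQ01 : (0:Q) ≠ 1 := by
    intro h
    have h1 : f 1 = 0 := by rw [map_one, ← h]
    rw [hf.ker] at h1
    obtain ⟨s, hs, hz⟩ := h1
    rw [mul_one] at hz
    exact hS.2.1 (hz ▸ hs)
  have hkey : ∀ P' : Set Q, IsPrimeIdealSet P' →
      ∃ p₀ ∈ M, locSet f S p₀ ⊆ P' := by
    intro P' hP'
    obtain ⟨p₀, h1, h2, h3⟩ := key1 h01R hrich hS hf hresp hP'
    exact ⟨p₀, ⟨h1, h2⟩, h3⟩
  have hMne : M.Nonempty := by
    obtain ⟨P', hP'⟩ := exists_prime Q hQ01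
    obtain ⟨p₀, hp₀, _⟩ := hkey P' hP'
    exact ⟨p₀, hp₀⟩
  have hRfin : (minPrimes R).Finite := (minPrimes_facts h01R hrich).1
  have hMfin : M.Finite := hRfin.subset fun p hp => hp.1
  have h1d : minPrimes Q =
      {P ∈ locSet f S '' M | ∀ P' ∈ locSet f S '' M, P' ⊆ P → P' = P} := by
    ext P'
    constructor
    · intro hmin
      have hmin' : IsMinimalPrimeIdealSet P' := hmin
      obtain ⟨p₀, hp₀M, hsub⟩ := hkey P' hmin'.1
      have heq : locSet f S p₀ = P' := hmin'.2 _ (hprime p₀ hp₀M) hsub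
      refine ⟨⟨p₀, hp₀M, heq⟩, ?_⟩
      rintro P'' ⟨p₁, hp₁M, rfl⟩ hsub'
      exact hmin'.2 _ (hprime p₁ hp₁M) hsub'
    · rintro ⟨⟨p, hpM, rfl⟩, hminimal⟩
      refine ⟨hprime p hpM, ?_⟩
      intro P'' hP'' hsub
      obtain ⟨p₀, hp₀M, hsub₀⟩ := hkey P'' hP''
      have h2 : locSet f S p₀ = locSet f S p :=
        hminimal _ ⟨p₀, hp₀M, rfl⟩ (hsub₀.trans hsub)
      exact subset_antisymm hsub (h2 ▸ hsub₀)
  have hQsub : minPrimes Q ⊆ locSet f S '' M := by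
    intro P' hP'
    rw [h1d] at hP'
    exact hP'.1
  have part2 : (minPrimes Q = locSet f S '' M) ↔
      ∀ P ∈ locSet f S '' M, ∀ P' ∈ locSet f S '' M, P ⊆ P' → P = P' := by
    constructor
    · intro hEq P hP P'' hP'' hsub
      rw [← hEq] at hP''
      obtain ⟨p, hpM, rfl⟩ := hP
      exact hP''.2 _ (hprime p hpM) hsub
    · intro hinc
      rw [h1d]
      ext P
      constructor
      · exact fun h => h.1
      · intro hP
        exact ⟨hP, fun P'' hP'' hsub => hinc P'' hP'' P hP hsub⟩
  refine ⟨⟨hMne, hRfin, Set.ncard_le_ncard (fun p hp => hp.1) hRfin, h1d, ?_⟩, part2, ?_⟩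
  · calc (minPrimes Q).ncard ≤ (locSet f S '' M).ncard :=
          Set.ncard_le_ncard hQsub (hMfin.image _)
      _ ≤ M.ncard := Set.ncard_image_le hMfin
  · intro hFG
    refine part2.mpr ?_
    rintro P ⟨p, hpM, rfl⟩ P'' ⟨p', hp'M, rfl⟩ hsub
    have hc : f ⁻¹' locSet f S p = p :=
      contraction_eq hSl hf hresp hpM.1 hpM.2 (hFG p hpM)
    have hc' : f ⁻¹' locSet f S p' = p' :=
      contraction_eq hSl hf hresp hp'M.1 hp'M.2 (hFG p' hp'M)
    have hpp' : p ⊆ p' := by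
      rw [← hc, ← hc']
      exact Set.preimage_mono hsub
    have : p = p' := hp'M.1.2 p hpM.1.1 hpp'
    rw [this]


end BavulaMinPrimes
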